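/- If g : [0,∞) → ℝ is Lipschitz with constant L, then for any probability densities p, q with respect to μ (with p > 0 a.e.), |∫ (q - p)·g(q/p) dμ| ≤ L·∫ (q - p)²/p dμ. -/

import Mathlib

open Set MeasureTheory

theorem delta_divergence_bound_lipschitz
    {X : Type*} [MeasurableSpace X] (μ : Measure X)
    (p q : X → ℝ) (g : ℝ → ℝ) (L : ℝ)
    (hp0 : ∀ x, 0 ≤ p x) (hq0 : ∀ x, 0 ≤ q x)
    (hppos : ∀ᵐ x ∂μ, 0 < p x)
    (hpm : Measurable p) (hqm : Measurable q) (hgm : Measurable g)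
    (hp : Integrable p μ) (hq : Integrable q μ)
    (hp1 : ∫ x, p x ∂μ = 1) (hq1 : ∫ x, q x ∂μ = 1)
    (hg : ∀ t ≥ (0:ℝ), ∀ s ≥ (0:ℝ), |g t - g s| ≤ L * |t - s|)
    (hint : Integrable (fun x => (q x - p x) * g (q x / p x)) μ)
    (hint2 : Integrable (fun x => (q x - p x) ^ 2 / p x) μ) :
    |∫ x, (q x - p x) * g (q x / p x) ∂μ| ≤
      L * ∫ x, (q x - p x) ^ 2 / p x ∂μ := by
  have hqp : Integrable (fun x => q x - p x) μ := hq.sub hp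
  have hqp0 : ∫ x, (q x - p x) ∂μ = 0 := by
    rw [integral_sub hq hp, hp1, hq1]; ring
  have hintc : Integrable (fun x => (q x - p x) * (g (q x / p x) - g 1)) μ := by
    have : (fun x => (q x - p x) * (g (q x / p x) - g 1)) =
        fun x => (q x - p x) * g (q x / p x) - g 1 * (q x - p x) := by
      funext x; ring
    rw [this]
    exact hint.sub (hqp.const_mul _)
  have heq : ∫ x, (q x - p x) * g (q x / p x) ∂μ =
      ∫ x, (q x - p x) * (g (q x / p x) - g 1) ∂μ := by
    have : ∫ x, (q x - p x) * (g (q x / p x) - g 1) ∂μ =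
        ∫ x, (q x - p x) * g (q x / p x) ∂μ - g 1 * ∫ x, (q x - p x) ∂μ := by
      rw [← MeasureTheory.integral_const_mul, ← integral_sub hint (hqp.const_mul _)]
      congr 1; funext x; ring
    rw [this, hqp0]; ring
  rw [heq]
  calc |∫ x, (q x - p x) * (g (q x / p x) - g 1) ∂μ|
      ≤ ∫ x, |(q x - p x) * (g (q x / p x) - g 1)| ∂μ := by
        simpa [Real.norm_eq_abs, abs_mul] using
          norm_integral_le_integral_norm (fun x => (q x - p x) * (g (q x / p x) - g 1)) (μ := μ)
    _ ≤ ∫ x, L * ((q x - p x) ^ 2 / p x) ∂μ := by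
        apply integral_mono_ae hintc.abs (hint2.const_mul L)
        filter_upwards [hppos] with x hpx
        rw [abs_mul]
        have h1 : |g (q x / p x) - g 1| ≤ L * |q x / p x - 1| :=
          hg _ (div_nonneg (hq0 x) (hp0 x)) 1 one_pos.le
        have h2 : |q x / p x - 1| = |q x - p x| / p x := by
          rw [div_sub' hpx.ne', abs_div, abs_of_pos hpx, mul_one]
        calc |q x - p x| * |g (q x / p x) - g 1|
            ≤ |q x - p x| * (L * (|q x - p x| / p x)) := by
              apply mul_le_mul_of_nonneg_left _ (abs_nonneg _)
              rw [← h2]; exact h1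
          _ = L * ((q x - p x) ^ 2 / p x) := by
              rw [sq, ← abs_mul_abs_self (q x - p x)]; ring
    _ = L * ∫ x, (q x - p x) ^ 2 / p x ∂μ := MeasureTheory.integral_const_mul L _
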